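/- Let $\xi^1, \xi^2$ be independent uniform random points in the integer ball $\mathbf{B}(R) \subset \mathbb{Z}^d$, $d \geq 2$, $R \geq 1$. Then $\mathbb{P}(|\xi^1| = |\xi^2|) \leq C(d) R^{-1}$. -/

import Mathlib

noncomputable def znorm {d : ℕ} (a : Fin d → ℤ) : ℝ :=
  Real.sqrt (∑ i, ((a i : ℝ)) ^ 2)

lemma znorm_le_iff {d : ℕ} (a : Fin d → ℤ) {R : ℝ} (hR : 0 ≤ R) :
    znorm a ≤ R ↔ ∑ i, ((a i : ℝ)) ^ 2 ≤ R ^ 2 :=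
  Real.sqrt_le_left hR

lemma sum_sq_eq_of_znorm_eq {d : ℕ} {a b : Fin d → ℤ} (h : znorm a = znorm b) :
    ∑ i, ((a i : ℝ)) ^ 2 = ∑ i, ((b i : ℝ)) ^ 2 := by
  have ha : Real.sqrt (∑ i, ((a i : ℝ)) ^ 2) ^ 2 = ∑ i, ((a i : ℝ)) ^ 2 :=
    Real.sq_sqrt (by positivity)
  have hb : Real.sqrt (∑ i, ((b i : ℝ)) ^ 2) ^ 2 = ∑ i, ((b i : ℝ)) ^ 2 :=
    Real.sq_sqrt (by positivity)
  rw [← ha, ← hb]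
  simp only [znorm] at h
  rw [h]

lemma coord_abs_le {d : ℕ} {a : Fin d → ℤ} {R : ℝ} (hR : 0 ≤ R)
    (h : znorm a ≤ R) (i : Fin d) : |(a i : ℝ)| ≤ R := by
  rw [znorm_le_iff a hR] at h
  have h1 : ((a i : ℝ)) ^ 2 ≤ R ^ 2 := by
    refine le_trans ?_ h
    exact Finset.single_le_sum (f := fun j => ((a j : ℝ)) ^ 2)
      (fun j _ => by positivity) (Finset.mem_univ i)
  calc |(a i : ℝ)| = Real.sqrt (((a i : ℝ)) ^ 2) := (Real.sqrt_sq_eq_abs _).symm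
  _ ≤ Real.sqrt (R ^ 2) := Real.sqrt_le_sqrt h1
  _ = R := Real.sqrt_sq hR

lemma coord_mem_Icc {d : ℕ} {a : Fin d → ℤ} {R : ℝ} (hR : 0 ≤ R)
    (h : znorm a ≤ R) (i : Fin d) :
    a i ∈ Finset.Icc (-(⌈R⌉₊ : ℤ)) (⌈R⌉₊ : ℤ) := by
  have h1 : |(a i : ℝ)| ≤ (⌈R⌉₊ : ℝ) := (coord_abs_le hR h i).trans (Nat.le_ceil R)
  have h2 : |a i| ≤ (⌈R⌉₊ : ℤ) := by
    exact_mod_cast (by push_cast at h1 ⊢; exact h1 :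
      |((a i : ℤ) : ℝ)| ≤ ((⌈R⌉₊ : ℤ) : ℝ))
  rw [Finset.mem_Icc, ← abs_le]
  exact h2

lemma ball_finite (d : ℕ) (R : ℝ) (hR : 0 ≤ R) :
    {a : Fin d → ℤ | znorm a ≤ R}.Finite := by
  apply Set.Finite.subset (Fintype.piFinset
    (fun _ : Fin d => Finset.Icc (-(⌈R⌉₊ : ℤ)) (⌈R⌉₊ : ℤ))).finite_toSet
  intro a ha
  simp only [Finset.coe_sort_coe, Finset.mem_coe, Fintype.mem_piFinset]
  exact fun i => coord_mem_Icc hR ha i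

lemma card_Icc_int (N : ℕ) : (Finset.Icc (-(N:ℤ)) (N:ℤ)).card = 2 * N + 1 := by
  rw [Int.card_Icc]; omega

lemma pair_count {d : ℕ} (hd : 1 ≤ d) {R : ℝ} (hR : 1 ≤ R) :
    ({p : (Fin d → ℤ) × (Fin d → ℤ) |
        znorm p.1 ≤ R ∧ znorm p.2 ≤ R ∧ znorm p.1 = znorm p.2}.ncard : ℝ)
      ≤ 2 * (5 * R) ^ (2 * d - 1) := by
  have hR0 : (0:ℝ) ≤ R := le_trans zero_le_one hR
  set N : ℕ := ⌈R⌉₊ with hN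
  set i₀ : Fin d := ⟨d - 1, by omega⟩ with hi₀
  set box : Finset (Fin d → ℤ) :=
    Fintype.piFinset (fun _ : Fin d => Finset.Icc (-(N:ℤ)) (N:ℤ)) with hbox
  set box2 : Finset (Fin d → ℤ) :=
    Fintype.piFinset (fun i : Fin d =>
      if i = i₀ then ({0, 1} : Finset ℤ) else Finset.Icc (-(N:ℤ)) (N:ℤ)) with hbox2
  set f : (Fin d → ℤ) × (Fin d → ℤ) → (Fin d → ℤ) × (Fin d → ℤ) :=
    fun p => (p.1, Function.update p.2 i₀ (if 0 ≤ p.2 i₀ then 0 else 1)) with hf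
  have hmaps : ∀ p ∈ {p : (Fin d → ℤ) × (Fin d → ℤ) |
      znorm p.1 ≤ R ∧ znorm p.2 ≤ R ∧ znorm p.1 = znorm p.2},
      f p ∈ ((box ×ˢ box2 : Finset _) : Set _) := by
    rintro ⟨a, b⟩ ⟨ha, hb, _⟩
    simp only [Finset.coe_sort_coe, Finset.mem_coe, Finset.mem_product, hf]
    constructor
    · rw [hbox, Fintype.mem_piFinset]
      exact fun i => coord_mem_Icc hR0 ha i
    · rw [hbox2, Fintype.mem_piFinset]
      intro i
      by_cases hi : i = i₀
      · rw [if_pos hi, hi, Function.update_self]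
        split <;> simp
      · rw [if_neg hi, Function.update_of_ne hi]
        exact coord_mem_Icc hR0 hb i
  have hinj : Set.InjOn f {p : (Fin d → ℤ) × (Fin d → ℤ) |
      znorm p.1 ≤ R ∧ znorm p.2 ≤ R ∧ znorm p.1 = znorm p.2} := by
    rintro ⟨a, b⟩ ⟨_, _, hab⟩ ⟨a', b'⟩ ⟨_, _, hab'⟩ hfe
    simp only [hf, Prod.mk.injEq] at hfe
    obtain ⟨h1, h2⟩ := hfe
    have hcoord : ∀ i : Fin d, i ≠ i₀ → b i = b' i := by
      intro i hi
      have := congrFun h2 i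
      rwa [Function.update_of_ne hi, Function.update_of_ne hi] at this
    have hsign : (if 0 ≤ b i₀ then (0:ℤ) else 1) = (if 0 ≤ b' i₀ then 0 else 1) := by
      have := congrFun h2 i₀
      rwa [Function.update_self, Function.update_self] at this
    have hsum : ∑ i, ((b i : ℝ)) ^ 2 = ∑ i, ((b' i : ℝ)) ^ 2 := by
      rw [← sum_sq_eq_of_znorm_eq hab, ← sum_sq_eq_of_znorm_eq hab', h1]
    have hrest : ∑ i ∈ Finset.univ.erase i₀, ((b i : ℝ)) ^ 2
        = ∑ i ∈ Finset.univ.erase i₀, ((b' i : ℝ)) ^ 2 := by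
      apply Finset.sum_congr rfl
      intro i hi
      rw [hcoord i (Finset.mem_erase.mp hi).1]
    have hsq : ((b i₀ : ℝ)) ^ 2 = ((b' i₀ : ℝ)) ^ 2 := by
      have e1 := Finset.add_sum_erase Finset.univ (fun i => ((b i : ℝ)) ^ 2)
        (Finset.mem_univ i₀)
      have e2 := Finset.add_sum_erase Finset.univ (fun i => ((b' i : ℝ)) ^ 2)
        (Finset.mem_univ i₀)
      rw [← e1, ← e2, hrest] at hsum
      linarith
    have hsqz : (b i₀) ^ 2 = (b' i₀) ^ 2 := by exact_mod_cast hsq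
    have hlast : b i₀ = b' i₀ := by
      have hfac : (b i₀ - b' i₀) * (b i₀ + b' i₀) = 0 := by ring_nf; linarith [hsqz]
      rcases mul_eq_zero.mp hfac with h | h
      · omega
      · by_cases hp : 0 ≤ b i₀ <;> by_cases hq : 0 ≤ b' i₀ <;>
          simp [hp, hq] at hsign ⊢ <;> omega
    refine Prod.ext h1 (funext fun i => ?_)
    by_cases hi : i = i₀
    · rw [hi]; exact hlast
    · exact hcoord i hi
  have hcount := Set.ncard_le_ncard_of_injOn f hmaps hinj
    (box ×ˢ box2).finite_toSet
  rw [Set.ncard_coe_finset] at hcount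
  have hboxcard : box.card = (2 * N + 1) ^ d := by
    rw [hbox, Fintype.card_piFinset]
    simp [card_Icc_int N]
  have hbox2card : box2.card = 2 * (2 * N + 1) ^ (d - 1) := by
    rw [hbox2, Fintype.card_piFinset]
    rw [← Finset.mul_prod_erase Finset.univ _ (Finset.mem_univ i₀)]
    rw [if_pos rfl]
    have : ∀ i ∈ Finset.univ.erase i₀,
        (if i = i₀ then ({0, 1} : Finset ℤ) else Finset.Icc (-(N:ℤ)) N).card
          = 2 * N + 1 := by
      intro i hi
      rw [if_neg (Finset.mem_erase.mp hi).1, card_Icc_int]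
    rw [Finset.prod_congr rfl this, Finset.prod_const,
      Finset.card_erase_of_mem (Finset.mem_univ i₀), Finset.card_univ,
      Fintype.card_fin]
    simp
  have hcard : (box ×ˢ box2).card = 2 * (2 * N + 1) ^ (2 * d - 1) := by
    rw [Finset.card_product, hboxcard, hbox2card]
    rw [show 2 * d - 1 = d + (d - 1) by omega, pow_add]
    ring
  rw [hcard] at hcount
  calc ({p : (Fin d → ℤ) × (Fin d → ℤ) |
        znorm p.1 ≤ R ∧ znorm p.2 ≤ R ∧ znorm p.1 = znorm p.2}.ncard : ℝ)
      ≤ ((2 * (2 * N + 1) ^ (2 * d - 1) : ℕ) : ℝ) := by exact_mod_cast hcount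
  _ ≤ 2 * (5 * R) ^ (2 * d - 1) := by
      push_cast
      have h5 : ((2 * N + 1 : ℕ) : ℝ) ≤ 5 * R := by
        push_cast
        have := Nat.ceil_lt_add_one hR0
        simp only [← hN] at this
        linarith
      have := pow_le_pow_left₀ (by positivity) h5 (2 * d - 1)
      push_cast at this
      linarith

lemma ball_count {d : ℕ} (hd : 1 ≤ d) {R : ℝ} (hR : 1 ≤ R) :
    (R / Real.sqrt d) ^ d ≤ ({a : Fin d → ℤ | znorm a ≤ R}.ncard : ℝ) := by
  have hR0 : (0:ℝ) ≤ R := le_trans zero_le_one hR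
  have hd0 : (0:ℝ) < d := by exact_mod_cast hd
  have hsd : 0 < Real.sqrt d := Real.sqrt_pos.mpr hd0
  have hs2 : Real.sqrt d ^ 2 = (d:ℝ) := Real.sq_sqrt hd0.le
  set m : ℕ := ⌊R / Real.sqrt d⌋₊ with hm
  set cube : Finset (Fin d → ℤ) :=
    Fintype.piFinset (fun _ : Fin d => Finset.Icc (-(m:ℤ)) (m:ℤ)) with hcube
  have hsub : (cube : Set (Fin d → ℤ)) ⊆ {a : Fin d → ℤ | znorm a ≤ R} := by
    intro a ha
    simp only [Finset.coe_sort_coe, Finset.mem_coe, hcube, Fintype.mem_piFinset] at ha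
    rw [Set.mem_setOf_eq, znorm_le_iff a hR0]
    have hcoord : ∀ i, ((a i : ℝ)) ^ 2 ≤ (m:ℝ) ^ 2 := by
      intro i
      have := ha i
      rw [Finset.mem_Icc] at this
      have h1 : |(a i : ℝ)| ≤ (m:ℝ) := by
        rw [abs_le]
        constructor <;> [exact_mod_cast this.1; exact_mod_cast this.2]
      calc ((a i : ℝ)) ^ 2 = |(a i : ℝ)| ^ 2 := (sq_abs _).symm
      _ ≤ (m:ℝ) ^ 2 := pow_le_pow_left₀ (abs_nonneg _) h1 2
    have hmle : (m:ℝ) ≤ R / Real.sqrt d := Nat.floor_le (by positivity)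
    calc ∑ i, ((a i : ℝ)) ^ 2 ≤ ∑ _i : Fin d, (m:ℝ) ^ 2 :=
          Finset.sum_le_sum fun i _ => hcoord i
    _ = d * (m:ℝ) ^ 2 := by rw [Finset.sum_const, Finset.card_univ, Fintype.card_fin]; ring
    _ ≤ d * (R / Real.sqrt d) ^ 2 := by
        have := pow_le_pow_left₀ (by positivity) hmle 2
        nlinarith
    _ = R ^ 2 := by rw [div_pow, hs2]; field_simp
  have hfin := ball_finite d R hR0
  have hle := Set.ncard_le_ncard hsub hfin
  rw [Set.ncard_coe_finset] at hle
  have hcubecard : cube.card = (2 * m + 1) ^ d := by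
    rw [hcube, Fintype.card_piFinset]
    simp [card_Icc_int m]
  have hbase : R / Real.sqrt d ≤ ((2 * m + 1 : ℕ) : ℝ) := by
    have := Nat.lt_floor_add_one (R / Real.sqrt d)
    push_cast
    simp only [← hm] at this
    linarith
  calc (R / Real.sqrt d) ^ d ≤ (((2 * m + 1 : ℕ) : ℝ)) ^ d :=
        pow_le_pow_left₀ (by positivity) hbase d
  _ = ((cube.card : ℕ) : ℝ) := by rw [hcubecard]; push_cast; ring
  _ ≤ ({a : Fin d → ℤ | znorm a ≤ R}.ncard : ℝ) := by exact_mod_cast hle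

theorem stmt15 (d : ℕ) (hd : 2 ≤ d) :
    ∃ C > 0, ∀ R : ℝ, 1 ≤ R →
      ({p : (Fin d → ℤ) × (Fin d → ℤ) |
          znorm p.1 ≤ R ∧ znorm p.2 ≤ R ∧ znorm p.1 = znorm p.2}.ncard : ℝ) /
        (({a : Fin d → ℤ | znorm a ≤ R}.ncard : ℝ)) ^ 2 ≤ C * R⁻¹ := by
  have hd1 : 1 ≤ d := by omega
  have hd0 : (0:ℝ) < d := by exact_mod_cast hd1
  refine ⟨2 * 5 ^ (2 * d - 1) * (d:ℝ) ^ d, by positivity, fun R hR => ?_⟩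
  have hR0 : (0:ℝ) < R := lt_of_lt_of_le zero_lt_one hR
  have hsd : 0 < Real.sqrt d := Real.sqrt_pos.mpr hd0
  have hs2 : Real.sqrt d ^ 2 = (d:ℝ) := Real.sq_sqrt hd0.le
  have hA := pair_count hd1 hR
  have hB := ball_count hd1 hR
  have hY : (0:ℝ) < (R / Real.sqrt d) ^ d := by positivity
  have hdiv : ({p : (Fin d → ℤ) × (Fin d → ℤ) |
          znorm p.1 ≤ R ∧ znorm p.2 ≤ R ∧ znorm p.1 = znorm p.2}.ncard : ℝ) /
        (({a : Fin d → ℤ | znorm a ≤ R}.ncard : ℝ)) ^ 2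
      ≤ (2 * (5 * R) ^ (2 * d - 1)) / ((R / Real.sqrt d) ^ d) ^ 2 := by
    apply div_le_div₀ (by positivity) hA (by positivity)
    exact pow_le_pow_left₀ hY.le hB 2
  refine hdiv.trans (le_of_eq ?_)
  rw [← pow_mul, mul_pow, div_pow, show d * 2 = 2 * d from mul_comm d 2,
    show Real.sqrt d ^ (2 * d) = ((d:ℝ)) ^ d by rw [pow_mul, hs2]]
  rw [show 2 * d = (2 * d - 1) + 1 by omega, pow_succ]
  have hRpow : R ^ (2 * d - 1) ≠ 0 := by positivity
  field_simp
  ring_nf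
  rw [show 1 + (d * 2 - 1) - 1 = d * 2 - 1 by omega]
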